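/- Let p, q, r, t ∈ ℝ with t > 0 and let θ ∈ ℝ with −π/3 < θ < π/3 (so that 2cosθ − 1 > 0). If α = (p+q+r)|t − e^{iθ}|² / (3(2cosθ − 1)), then D[α,p,q,r,t,θ] = f₁(t,θ)·T₁ − ((f₁(t,θ) − f₂(t,θ))/4)·T₂. -/

import Mathlib

open Complex Matrix

noncomputable def Dpoly (α p q r t θ : ℝ) : ℝ :=
  (p * q * r) * t ^ 6 + α * (p * q + q * r + r * p) * t ^ 4
    - 2 * (α * (p * q + q * r + r * p) + Real.cos (3 * θ) * (p * q * r)) * t ^ 3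
    + α * (1 - 2 * Real.cos (3 * θ)) * (p * q + q * r + r * p) * t ^ 2
    - 2 * α * (α * (p + q + r) + α * Real.cos (3 * θ) * (p + q + r)
        + (p * q + q * r + r * p)) * t
    + (p * q * r) + α * (p * q + q * r + r * p) - 2 * α ^ 3 * (1 + Real.cos (3 * θ))

noncomputable def T1 (p q r : ℝ) : ℝ :=
  -(4 / 27) * (p + q + r) ^ 3 + (1 / 3) * (p + q + r) * (p * q + q * r + r * p) + p * q * r

noncomputable def T2 (p q r : ℝ) : ℝ :=
  -(4 / 9) * (p + q + r) ^ 3 + (4 / 3) * (p + q + r) * (p * q + q * r + r * p)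

noncomputable def f1 (t θ : ℝ) : ℝ := 1 - 2 * t ^ 3 * Real.cos (3 * θ) + t ^ 6

noncomputable def f2 (t θ : ℝ) : ℝ :=
  Complex.normSq ((t : ℂ) - exp (θ * I)) *
    (1 - 2 * t + t ^ 2 - 2 * t ^ 3 + t ^ 4 - 2 * t ^ 2 * Real.cos (3 * θ)) /
    (2 * Real.cos θ - 1)

set_option maxHeartbeats 4000000 in
/-- With `α = (p+q+r)|t-e^{iθ}|²/(3(2cosθ-1))`, one has
`D[α,p,q,r,t,θ] = f₁(t,θ)T₁ - ((f₁(t,θ)-f₂(t,θ))/4)T₂`. -/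
theorem Dpoly_eq (p q r t θ α : ℝ) (ht : 0 < t)
    (hθl : -(Real.pi / 3) < θ) (hθr : θ < Real.pi / 3)
    (hα : α = (p + q + r) * Complex.normSq ((t : ℂ) - exp (θ * I)) /
        (3 * (2 * Real.cos θ - 1))) :
    Dpoly α p q r t θ = f1 t θ * T1 p q r - ((f1 t θ - f2 t θ) / 4) * T2 p q r := by
  have hns : Complex.normSq ((t : ℂ) - exp (θ * I))
      = (t - Real.cos θ) ^ 2 + (1 - Real.cos θ ^ 2) := by
    rw [Complex.exp_mul_I]
    simp only [Complex.normSq_apply, Complex.sub_re, Complex.sub_im,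
      Complex.add_re, Complex.add_im, Complex.mul_re, Complex.mul_im,
      Complex.I_re, Complex.I_im, Complex.ofReal_re, Complex.ofReal_im,
      Complex.cos_ofReal_re, Complex.sin_ofReal_re, Complex.cos_ofReal_im,
      Complex.sin_ofReal_im]
    nlinarith [Real.sin_sq_add_cos_sq θ]
  have hcos : 1 / 2 < Real.cos θ := by
    have habs : |θ| < Real.pi / 3 := abs_lt.mpr ⟨hθl, hθr⟩
    have h1 : Real.cos (Real.pi / 3) < Real.cos |θ| := by
      apply Real.cos_lt_cos_of_nonneg_of_le_pi (abs_nonneg θ)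
      · linarith [Real.pi_pos]
      · exact habs
    rwa [Real.cos_pi_div_three, Real.cos_abs] at h1
  have hd : 2 * Real.cos θ - 1 ≠ 0 := by linarith
  have hc3 : Real.cos (3 * θ) = 4 * Real.cos θ ^ 3 - 3 * Real.cos θ :=
    Real.cos_three_mul θ
  subst hα
  simp only [Dpoly, f1, f2, T1, T2]
  rw [hns, hc3]
  field_simp [show Real.cos θ * 2 - 1 ≠ 0 by linarith]
  set_option maxRecDepth 100000 in ring
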